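/- Let q be a prime, ℓ, n ≥ 1, and let C be uniformly distributed over ℓ×n matrices with entries in ℤ/q. Let u ∈ (ℤ/q)^ℓ be fixed, and let N = |{s ∈ {0,1}^n \ {0} : Cs = u}|. Then Pr[N ≤ (2^n − 1)/(2q^ℓ)] ≤ 4q^ℓ/(2^n − 1). -/

import Mathlib

open Finset

section Aux

variable {G H : Type*} [AddCommGroup G] [AddCommGroup H] [Fintype G] [Fintype H] [DecidableEq H]

lemma fiber_card_mul (φ : G →+ H) (hφ : Function.Surjective φ) (y : H) :
    (univ.filter fun x => φ x = y).card * Fintype.card H = Fintype.card G := by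
  classical
  have hconst : ∀ z : H,
      (univ.filter fun x => φ x = z).card = (univ.filter fun x => φ x = 0).card := by
    intro z
    obtain ⟨x₀, hx₀⟩ := hφ z
    refine Finset.card_bij' (fun x _ => x - x₀) (fun x _ => x + x₀) ?_ ?_ ?_ ?_
    · intro a ha
      simp only [mem_filter, mem_univ, true_and] at ha ⊢
      simp [map_sub, ha, hx₀]
    · intro a ha
      simp only [mem_filter, mem_univ, true_and] at ha ⊢
      simp [map_add, ha, hx₀]
    · intros; simp
    · intros; simp
  have h1 : Fintype.card G = ∑ z : H, (univ.filter fun x => φ x = z).card := by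
    rw [← Finset.card_univ (α := G)]
    exact Finset.card_eq_sum_card_fiberwise (fun x _ => mem_univ _)
  rw [hconst y, h1]
  simp only [hconst]
  rw [Finset.sum_const, card_univ, smul_eq_mul, mul_comm]

end Aux

section Surj

variable {q ℓ n : ℕ}

lemma dotSingle (k : Fin n) (a : ZMod q) (s : Fin n → ZMod q) :
    ∑ x, (Pi.single k a : Fin n → ZMod q) x * s x = a * s k := by
  rw [Finset.sum_eq_single k]
  · rw [Pi.single_eq_same]
  · intro b _ hb
    rw [Pi.single_eq_of_ne hb, zero_mul]
  · simp

lemma surj_one {s : Fin n → ZMod q} {j : Fin n} (hsj : s j = 1) :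
    Function.Surjective (fun C : Matrix (Fin ℓ) (Fin n) (ZMod q) => C.mulVec s) := by
  intro v
  refine ⟨Matrix.of (fun i => (Pi.single j (v i) : Fin n → ZMod q)), ?_⟩
  funext i
  show ∑ x, (Pi.single j (v i) : Fin n → ZMod q) x * s x = v i
  rw [dotSingle, hsj, mul_one]

lemma surj_pair {s t : Fin n → ZMod q} {j k : Fin n} (hsj : s j = 1) (htj : t j = 0)
    (htk : t k = 1) :
    Function.Surjective
      (fun C : Matrix (Fin ℓ) (Fin n) (ZMod q) => (C.mulVec s, C.mulVec t)) := by
  rintro ⟨v, w⟩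
  refine ⟨Matrix.of (fun i => (Pi.single k (w i) : Fin n → ZMod q) + (Pi.single j (v i - w i * s k) : Fin n → ZMod q)), ?_⟩
  have hrow : ∀ (i : Fin ℓ) (r : Fin n → ZMod q),
      (∑ x, ((Pi.single k (w i) : Fin n → ZMod q) x + (Pi.single j (v i - w i * s k) : Fin n → ZMod q) x) * r x)
        = w i * r k + (v i - w i * s k) * r j := by
    intro i r
    simp only [add_mul]
    rw [Finset.sum_add_distrib, dotSingle, dotSingle]
  refine Prod.ext ?_ ?_
  · funext i
    show ∑ x, ((Pi.single k (w i) : Fin n → ZMod q) x + (Pi.single j (v i - w i * s k) : Fin n → ZMod q) x) * s x = v i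
    rw [hrow, hsj]; ring
  · funext i
    show ∑ x, ((Pi.single k (w i) : Fin n → ZMod q) x + (Pi.single j (v i - w i * s k) : Fin n → ZMod q) x) * t x = w i
    rw [hrow, htj, htk]; ring

end Surj

set_option maxHeartbeats 1600000 in
open Classical in
/-- For a uniformly random lossy kernel matrix `C` over `ℤ/q` and fixed `u`, the number `N`
of nonzero binary vectors `s` with `Cs = u` satisfies
`Pr[N ≤ (2^n − 1)/(2q^ℓ)] ≤ 4q^ℓ/(2^n − 1)`. -/
theorem stmt4 (q ℓ n : ℕ) [Fact (Nat.Prime q)] (hℓ : 1 ≤ ℓ) (hn : 1 ≤ n)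
    (u : Fin ℓ → ZMod q) :
    ((Finset.univ.filter (fun C : Matrix (Fin ℓ) (Fin n) (ZMod q) =>
          ((Finset.univ.filter (fun s : Fin n → ZMod q =>
              (∀ i, s i = 0 ∨ s i = 1) ∧ s ≠ 0 ∧ C.mulVec s = u)).card : ℝ)
            ≤ ((2 : ℝ) ^ n - 1) / (2 * (q : ℝ) ^ ℓ))).card : ℝ)
      / (Fintype.card (Matrix (Fin ℓ) (Fin n) (ZMod q)) : ℝ)
      ≤ 4 * (q : ℝ) ^ ℓ / ((2 : ℝ) ^ n - 1) := by
  classical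
  have hq1 : 1 < q := (Fact.out : q.Prime).one_lt
  set Q : ℝ := (q : ℝ) ^ ℓ with hQdef
  have hQpos : 0 < Q := by positivity
  set S : Finset (Fin n → ZMod q) :=
    univ.filter (fun s => (∀ i, s i = 0 ∨ s i = 1) ∧ s ≠ 0) with hSdef
  -- cardinality of S
  have hScard : S.card = 2 ^ n - 1 := by
    have hB : (univ.filter (fun s : Fin n → ZMod q => ∀ i, s i = 0 ∨ s i = 1))
        = Fintype.piFinset (fun _ : Fin n => ({0, 1} : Finset (ZMod q))) := by
      ext s
      simp [Fintype.mem_piFinset]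
    have hBcard : (univ.filter (fun s : Fin n → ZMod q => ∀ i, s i = 0 ∨ s i = 1)).card
        = 2 ^ n := by
      rw [hB, Fintype.card_piFinset]
      simp [Finset.card_pair (zero_ne_one (α := ZMod q))]
    have hSB : S = (univ.filter (fun s : Fin n → ZMod q => ∀ i, s i = 0 ∨ s i = 1)).erase 0 := by
      ext s
      simp only [hSdef, mem_filter, mem_univ, true_and, mem_erase]
      tauto
    rw [hSB, Finset.card_erase_of_mem, hBcard]
    simp
  set m : ℝ := (S.card : ℝ) with hmdef
  have h2n : (1 : ℕ) ≤ 2 ^ n := Nat.one_le_two_pow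
  have hmval : m = (2 : ℝ) ^ n - 1 := by
    rw [hmdef, hScard]
    push_cast [h2n]
    ring
  have hmpos : 0 < m := by
    rw [hmval]
    have : (2 : ℝ) ^ 1 ≤ (2 : ℝ) ^ n := by
      apply pow_le_pow_right₀ (by norm_num) hn
    simp at this
    linarith
  set M : ℝ := (Fintype.card (Matrix (Fin ℓ) (Fin n) (ZMod q)) : ℝ) with hMdef
  have hMpos : 0 < M := by
    rw [hMdef]
    have : 0 < Fintype.card (Matrix (Fin ℓ) (Fin n) (ZMod q)) := Fintype.card_pos
    exact_mod_cast this
  -- membership facts for S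
  have hSmem : ∀ s ∈ S, (∀ i, s i = 0 ∨ s i = 1) ∧ s ≠ 0 := by
    intro s hs
    simpa [hSdef] using hs
  -- single fiber count
  have hcardH : (Fintype.card (Fin ℓ → ZMod q) : ℝ) = Q := by
    rw [Fintype.card_fun, ZMod.card, Fintype.card_fin]
    push_cast
    rfl
  have hfib1 : ∀ s ∈ S,
      ((univ.filter fun C : Matrix (Fin ℓ) (Fin n) (ZMod q) => C.mulVec s = u).card : ℝ) * Q
        = M := by
    intro s hs
    obtain ⟨hbin, hne⟩ := hSmem s hs
    obtain ⟨j, hj⟩ : ∃ j, s j ≠ 0 := by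
      by_contra h
      push_neg at h
      exact hne (funext h)
    have hsj : s j = 1 := (hbin j).resolve_left hj
    let φ : Matrix (Fin ℓ) (Fin n) (ZMod q) →+ (Fin ℓ → ZMod q) :=
      { toFun := fun C => C.mulVec s
        map_zero' := Matrix.zero_mulVec s
        map_add' := fun A B => Matrix.add_mulVec A B s }
    have hsurj : Function.Surjective φ := surj_one hsj
    have := fiber_card_mul φ hsurj u
    have hcast : ((univ.filter fun C : Matrix (Fin ℓ) (Fin n) (ZMod q) => C.mulVec s = u).card
        * Fintype.card (Fin ℓ → ZMod q) : ℝ) = M := by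
      rw [hMdef]
      exact_mod_cast congrArg (Nat.cast : ℕ → ℝ) this
    rw [← hcardH]
    push_cast at hcast ⊢
    linarith [hcast]
  -- pair fiber count
  have key : ∀ s ∈ S, ∀ t ∈ S, (∃ j, s j = 1 ∧ t j = 0) →
      ((univ.filter fun C : Matrix (Fin ℓ) (Fin n) (ZMod q) =>
          C.mulVec s = u ∧ C.mulVec t = u).card : ℝ) * (Q * Q) = M := by
    intro s hs t ht ⟨j, hsj, htj⟩
    obtain ⟨hbt, hnet⟩ := hSmem t ht
    obtain ⟨k, hk⟩ : ∃ k, t k ≠ 0 := by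
      by_contra h
      push_neg at h
      exact hnet (funext h)
    have htk : t k = 1 := (hbt k).resolve_left hk
    let φ : Matrix (Fin ℓ) (Fin n) (ZMod q) →+ ((Fin ℓ → ZMod q) × (Fin ℓ → ZMod q)) :=
      { toFun := fun C => (C.mulVec s, C.mulVec t)
        map_zero' := by simp [Matrix.zero_mulVec, Prod.ext_iff]
        map_add' := fun A B => by simp [Matrix.add_mulVec, Prod.ext_iff] }
    have hsurj : Function.Surjective φ := surj_pair hsj htj htk
    have hnat := fiber_card_mul φ hsurj (u, u)
    have hfil : (univ.filter fun C : Matrix (Fin ℓ) (Fin n) (ZMod q) => φ C = (u, u))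
        = (univ.filter fun C : Matrix (Fin ℓ) (Fin n) (ZMod q) =>
            C.mulVec s = u ∧ C.mulVec t = u) := by
      apply Finset.filter_congr
      intro C _
      simp [φ, Prod.ext_iff]
    rw [hfil] at hnat
    have hcardH2 : (Fintype.card ((Fin ℓ → ZMod q) × (Fin ℓ → ZMod q)) : ℝ) = Q * Q := by
      rw [Fintype.card_prod]
      push_cast
      rw [hcardH]
    have hcast : ((univ.filter fun C : Matrix (Fin ℓ) (Fin n) (ZMod q) =>
        C.mulVec s = u ∧ C.mulVec t = u).card
        * Fintype.card ((Fin ℓ → ZMod q) × (Fin ℓ → ZMod q)) : ℝ) = M := by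
      rw [hMdef]
      exact_mod_cast congrArg (Nat.cast : ℕ → ℝ) hnat
    rw [← hcardH2]
    push_cast at hcast ⊢
    linarith [hcast]
  have hfib2 : ∀ s ∈ S, ∀ t ∈ S, s ≠ t →
      ((univ.filter fun C : Matrix (Fin ℓ) (Fin n) (ZMod q) =>
          C.mulVec s = u ∧ C.mulVec t = u).card : ℝ) * (Q * Q) = M := by
    intro s hs t ht hst
    obtain ⟨j, hj⟩ : ∃ j, s j ≠ t j := by
      by_contra h
      push_neg at h
      exact hst (funext h)
    obtain ⟨hbs, -⟩ := hSmem s hs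
    obtain ⟨hbt, -⟩ := hSmem t ht
    rcases hbs j with h1 | h1 <;> rcases hbt j with h2 | h2
    · exact absurd (h1.trans h2.symm) hj
    · have := key t ht s hs ⟨j, h2, h1⟩
      rw [← this]
      congr 1
      norm_cast
      congr 1
      apply Finset.filter_congr
      intro C _
      simp [and_comm]
    · exact key s hs t ht ⟨j, h1, h2⟩
    · exact absurd (h1.trans h2.symm) hj
  -- N as a sum of indicators
  set N : Matrix (Fin ℓ) (Fin n) (ZMod q) → ℝ :=
    fun C => ((S.filter fun s => C.mulVec s = u).card : ℝ) with hNdef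
  have hNsum : ∀ C, N C = ∑ s ∈ S, (if C.mulVec s = u then (1 : ℝ) else 0) := by
    intro C
    rw [hNdef, Finset.sum_boole]
  -- first moment
  have hsum1 : ∑ C : Matrix (Fin ℓ) (Fin n) (ZMod q), N C = m * (M / Q) := by
    calc ∑ C : Matrix (Fin ℓ) (Fin n) (ZMod q), N C
        = ∑ C : Matrix (Fin ℓ) (Fin n) (ZMod q), ∑ s ∈ S,
            (if C.mulVec s = u then (1 : ℝ) else 0) := by
          exact Finset.sum_congr rfl (fun C _ => hNsum C)
      _ = ∑ s ∈ S, ∑ C : Matrix (Fin ℓ) (Fin n) (ZMod q),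
            (if C.mulVec s = u then (1 : ℝ) else 0) := Finset.sum_comm
      _ = ∑ s ∈ S, ((univ.filter fun C : Matrix (Fin ℓ) (Fin n) (ZMod q) =>
            C.mulVec s = u).card : ℝ) := by
          exact Finset.sum_congr rfl (fun s _ => Finset.sum_boole _ _)
      _ = ∑ s ∈ S, M / Q := by
          refine Finset.sum_congr rfl (fun s hs => ?_)
          have := hfib1 s hs
          field_simp
          linarith
      _ = m * (M / Q) := by
          rw [Finset.sum_const, hmdef]
          ring
  -- second moment
  have hsum2 : ∑ C : Matrix (Fin ℓ) (Fin n) (ZMod q), (N C) ^ 2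
      = m * (M / Q) + m * (m - 1) * (M / (Q * Q)) := by
    have hexp : ∀ C : Matrix (Fin ℓ) (Fin n) (ZMod q), (N C) ^ 2
        = ∑ s ∈ S, ∑ t ∈ S, (if C.mulVec s = u ∧ C.mulVec t = u then (1 : ℝ) else 0) := by
      intro C
      rw [sq, hNsum C, Finset.sum_mul_sum]
      refine Finset.sum_congr rfl (fun s _ => Finset.sum_congr rfl (fun t _ => ?_))
      split_ifs <;> simp_all
    calc ∑ C : Matrix (Fin ℓ) (Fin n) (ZMod q), (N C) ^ 2
        = ∑ C : Matrix (Fin ℓ) (Fin n) (ZMod q), ∑ s ∈ S, ∑ t ∈ S,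
            (if C.mulVec s = u ∧ C.mulVec t = u then (1 : ℝ) else 0) :=
          Finset.sum_congr rfl (fun C _ => hexp C)
      _ = ∑ s ∈ S, ∑ t ∈ S, ∑ C : Matrix (Fin ℓ) (Fin n) (ZMod q),
            (if C.mulVec s = u ∧ C.mulVec t = u then (1 : ℝ) else 0) := by
          rw [Finset.sum_comm]
          exact Finset.sum_congr rfl (fun s _ => Finset.sum_comm)
      _ = ∑ s ∈ S, ∑ t ∈ S, ((univ.filter fun C : Matrix (Fin ℓ) (Fin n) (ZMod q) =>
            C.mulVec s = u ∧ C.mulVec t = u).card : ℝ) :=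
          Finset.sum_congr rfl (fun s _ => Finset.sum_congr rfl
            (fun t _ => Finset.sum_boole _ _))
      _ = ∑ s ∈ S, (M / Q + (m - 1) * (M / (Q * Q))) := by
          refine Finset.sum_congr rfl (fun s hs => ?_)
          rw [← Finset.sum_erase_add _ _ hs]
          have hdiag : ((univ.filter fun C : Matrix (Fin ℓ) (Fin n) (ZMod q) =>
              C.mulVec s = u ∧ C.mulVec s = u).card : ℝ) = M / Q := by
            have heq : (univ.filter fun C : Matrix (Fin ℓ) (Fin n) (ZMod q) =>
                C.mulVec s = u ∧ C.mulVec s = u)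
                = (univ.filter fun C : Matrix (Fin ℓ) (Fin n) (ZMod q) =>
                C.mulVec s = u) := by
              apply Finset.filter_congr
              intro C _
              simp
            rw [heq]
            have := hfib1 s hs
            field_simp
            linarith
          have hoff : ∀ t ∈ S.erase s,
              ((univ.filter fun C : Matrix (Fin ℓ) (Fin n) (ZMod q) =>
                C.mulVec s = u ∧ C.mulVec t = u).card : ℝ) = M / (Q * Q) := by
            intro t ht
            obtain ⟨hts, htS⟩ := Finset.mem_erase.mp ht
            have := hfib2 s hs t htS (Ne.symm hts)
            have hQQ : 0 < Q * Q := by positivity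
            field_simp
            linarith
          rw [Finset.sum_congr rfl hoff, hdiag, Finset.sum_const,
            Finset.card_erase_of_mem hs]
          have hS1 : 1 ≤ S.card := by
            rw [hScard]
            have h2 : 2 ≤ 2 ^ n := by
              calc 2 = 2 ^ 1 := rfl
                _ ≤ 2 ^ n := Nat.pow_le_pow_right (by norm_num) hn
            omega
          have : ((S.card - 1 : ℕ) : ℝ) = m - 1 := by
            rw [hmdef]
            push_cast [hS1]
            ring
          rw [nsmul_eq_mul, this]
          ring
      _ = m * (M / Q) + m * (m - 1) * (M / (Q * Q)) := by
          rw [Finset.sum_const, hmdef, nsmul_eq_mul]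
          ring
  -- Chebyshev
  set μ : ℝ := m / Q with hμdef
  have hcardΩ : ((univ : Finset (Matrix (Fin ℓ) (Fin n) (ZMod q))).card : ℝ) = M := by
    rw [hMdef, Finset.card_univ]
  have hvar : ∑ C : Matrix (Fin ℓ) (Fin n) (ZMod q), (N C - μ) ^ 2 ≤ m * M / Q := by
    have hexpand : ∑ C : Matrix (Fin ℓ) (Fin n) (ZMod q), (N C - μ) ^ 2
        = (∑ C : Matrix (Fin ℓ) (Fin n) (ZMod q), (N C) ^ 2)
          - 2 * μ * (∑ C : Matrix (Fin ℓ) (Fin n) (ZMod q), N C) + M * μ ^ 2 := by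
      calc ∑ C : Matrix (Fin ℓ) (Fin n) (ZMod q), (N C - μ) ^ 2
          = ∑ C : Matrix (Fin ℓ) (Fin n) (ZMod q), ((N C) ^ 2 - 2 * μ * N C + μ ^ 2) :=
            Finset.sum_congr rfl (fun C _ => by ring)
        _ = (∑ C : Matrix (Fin ℓ) (Fin n) (ZMod q), (N C) ^ 2)
              - (∑ C : Matrix (Fin ℓ) (Fin n) (ZMod q), 2 * μ * N C)
              + (∑ _C : Matrix (Fin ℓ) (Fin n) (ZMod q), μ ^ 2) := by
            rw [Finset.sum_add_distrib, Finset.sum_sub_distrib]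
        _ = (∑ C : Matrix (Fin ℓ) (Fin n) (ZMod q), (N C) ^ 2)
              - 2 * μ * (∑ C : Matrix (Fin ℓ) (Fin n) (ZMod q), N C) + M * μ ^ 2 := by
            rw [← Finset.mul_sum, Finset.sum_const, nsmul_eq_mul, hcardΩ]
    rw [hexpand, hsum1, hsum2, hμdef]
    have h1 : m * (M / Q) + m * (m - 1) * (M / (Q * Q))
        - 2 * (m / Q) * (m * (M / Q)) + M * (m / Q) ^ 2
        = m * M / Q - m * M / (Q * Q) := by
      field_simp
      ring
    rw [h1]
    have : 0 ≤ m * M / (Q * Q) := by positivity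
    linarith
  -- the bad event
  have hset : ∀ C : Matrix (Fin ℓ) (Fin n) (ZMod q),
      (univ.filter (fun s : Fin n → ZMod q =>
        (∀ i, s i = 0 ∨ s i = 1) ∧ s ≠ 0 ∧ C.mulVec s = u))
      = S.filter (fun s => C.mulVec s = u) := by
    intro C
    rw [hSdef, Finset.filter_filter]
    apply Finset.filter_congr
    intro s _
    tauto
  set T : Finset (Matrix (Fin ℓ) (Fin n) (ZMod q)) :=
    univ.filter (fun C => N C ≤ μ / 2) with hTdef
  have hTgoal : (Finset.univ.filter (fun C : Matrix (Fin ℓ) (Fin n) (ZMod q) =>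
        ((Finset.univ.filter (fun s : Fin n → ZMod q =>
            (∀ i, s i = 0 ∨ s i = 1) ∧ s ≠ 0 ∧ C.mulVec s = u)).card : ℝ)
          ≤ ((2 : ℝ) ^ n - 1) / (2 * (q : ℝ) ^ ℓ))) = T := by
    rw [hTdef]
    apply Finset.filter_congr
    intro C _
    rw [hset C]
    constructor
    · intro h
      rw [hNdef, hμdef, hmval]
      calc ((S.filter fun s => C.mulVec s = u).card : ℝ)
          ≤ ((2 : ℝ) ^ n - 1) / (2 * (q : ℝ) ^ ℓ) := h
        _ = ((2 : ℝ) ^ n - 1) / Q / 2 := by rw [hQdef]; ring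
    · intro h
      have := h
      rw [hNdef, hμdef, hmval] at this
      calc ((S.filter fun s => C.mulVec s = u).card : ℝ)
          ≤ ((2 : ℝ) ^ n - 1) / Q / 2 := this
        _ = ((2 : ℝ) ^ n - 1) / (2 * (q : ℝ) ^ ℓ) := by rw [hQdef]; ring
  have hTbound : (T.card : ℝ) * (μ / 2) ^ 2
      ≤ ∑ C : Matrix (Fin ℓ) (Fin n) (ZMod q), (N C - μ) ^ 2 := by
    have h1 : (T.card : ℝ) * (μ / 2) ^ 2 = ∑ C ∈ T, (μ / 2) ^ 2 := by
      rw [Finset.sum_const, nsmul_eq_mul]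
    rw [h1]
    have h2 : ∑ C ∈ T, (μ / 2) ^ 2 ≤ ∑ C ∈ T, (N C - μ) ^ 2 := by
      refine Finset.sum_le_sum (fun C hC => ?_)
      have hC' : N C ≤ μ / 2 := by
        rw [hTdef] at hC
        exact (Finset.mem_filter.mp hC).2
      have hμpos : 0 ≤ μ := by
        rw [hμdef]; positivity
      have hN0 : 0 ≤ N C := by
        rw [hNdef]; positivity
      have : μ / 2 ≤ μ - N C := by linarith
      calc (μ / 2) ^ 2 ≤ (μ - N C) ^ 2 := by nlinarith
        _ = (N C - μ) ^ 2 := by ring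
    refine h2.trans ?_
    refine Finset.sum_le_sum_of_subset_of_nonneg (Finset.subset_univ T) ?_
    intro C _ _
    positivity
  -- final arithmetic
  rw [hTgoal, ← hmval]
  have hfinal : (T.card : ℝ) * (μ / 2) ^ 2 ≤ m * M / Q := hTbound.trans hvar
  rw [div_le_div_iff₀ hMpos hmpos]
  have hμval : μ = m / Q := hμdef
  have hT0 : (0 : ℝ) ≤ T.card := by positivity
  have hkey : (T.card : ℝ) * (m^2 / (4 * Q^2)) ≤ m * M / Q := by
    have hsq : (μ / 2) ^ 2 = m^2 / (4 * Q^2) := by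
      rw [hμval, div_div, div_pow]
      congr 1
      ring
    rw [← hsq]
    exact hfinal
  have h4 : (T.card : ℝ) * m ≤ 4 * M * Q := by
    have hh := mul_le_mul_of_nonneg_right hkey
      (le_of_lt (show (0:ℝ) < 4 * Q^2 / m by positivity))
    calc (T.card : ℝ) * m
        = (T.card : ℝ) * (m^2 / (4 * Q^2)) * (4 * Q^2 / m) := by
          field_simp
      _ ≤ m * M / Q * (4 * Q^2 / m) := hh
      _ = 4 * M * Q := by field_simp
  calc (T.card : ℝ) * m ≤ 4 * M * Q := h4
    _ = 4 * (q:ℝ)^ℓ * M := by rw [hQdef]; ring
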